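/- If every pair of concurrent operations commutes (applying them in either order to any state yields the same state), then any two causally-consistent linearizations of the same finite set of operations produce the same final state when applied in order to the same initial state. -/

import Mathlib

lemma foldl_middle {Op State : Type*} (apply : Op → State → State) (x : Op) :
    ∀ (l : List Op) (s : State),
      (∀ b ∈ l, ∀ s, apply x (apply b s) = apply b (apply x s)) →
      ∀ r : List Op,
        (l ++ x :: r).foldl (fun s o => apply o s) s
          = (l ++ r).foldl (fun s o => apply o s) (apply x s) := by
  intro l
  induction l with
  | nil => intro s _ r; simp
  | cons b l ih =>
      intro s h r
      simp only [List.cons_append, List.foldl_cons]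
      rw [ih (apply b s) (fun c hc => h c (List.mem_cons_of_mem _ hc)) r,
        h b List.mem_cons_self s]

/-- If every pair of concurrent (causally incomparable) operations commutes, then any
two causally-consistent linearizations of the same finite set of operations produce the
same final state from the same initial state. -/
theorem concurrent_comm_implies_convergence {Op State : Type*}
    (prec : Op → Op → Prop)
    (hirr : Irreflexive prec) (htrans : Transitive prec)
    (apply : Op → State → State)
    (hcomm : ∀ o1 o2, o1 ≠ o2 → ¬ prec o1 o2 → ¬ prec o2 o1 →
      ∀ s, apply o2 (apply o1 s) = apply o1 (apply o2 s))
    (L1 L2 : List Op) (hperm : L1.Perm L2) (hnodup : L1.Nodup)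
    (hlin1 : L1.Pairwise (fun a b => ¬ prec b a))
    (hlin2 : L2.Pairwise (fun a b => ¬ prec b a))
    (s : State) :
    L1.foldl (fun s o => apply o s) s = L2.foldl (fun s o => apply o s) s := by
  induction L1 generalizing L2 s with
  | nil => rw [← hperm.nil_eq]
  | cons a t ih =>
      have haL2 : a ∈ L2 := hperm.mem_iff.mp List.mem_cons_self
      obtain ⟨l, r, rfl⟩ := List.append_of_mem haL2
      have hperm' : t.Perm (l ++ r) :=
        (List.perm_cons a).mp (hperm.trans List.perm_middle)
      have hnodup2 : (l ++ a :: r).Nodup := hperm.nodup_iff.mp hnodup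
      have hanl : a ∉ l := fun h =>
        (List.nodup_cons.mp (List.nodup_middle.mp hnodup2)).1 (List.mem_append_left r h)
      -- a commutes with every b ∈ l
      have hcommute : ∀ b ∈ l, ∀ s, apply a (apply b s) = apply b (apply a s) := by
        intro b hb s'
        have hba : b ∈ t := hperm'.mem_iff.mpr (List.mem_append_left r hb)
        have hne : b ≠ a := fun h => hanl (h ▸ hb)
        have h1 : ¬ prec b a := (List.pairwise_cons.mp hlin1).1 b hba
        have h2 : ¬ prec a b := by
          have := List.pairwise_append.mp hlin2
          exact this.2.2 b hb a List.mem_cons_self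
        exact hcomm b a hne h1 h2 s'
      have hlin2' : (l ++ r).Pairwise (fun a b => ¬ prec b a) :=
        hlin2.sublist (by simp)
      rw [List.foldl_cons, foldl_middle apply a l s hcommute r]
      exact ih (l ++ r) hperm' (List.nodup_cons.mp hnodup).2
        (List.pairwise_cons.mp hlin1).2 hlin2' (apply a s)
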